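/- For r ≥ 2, the total mutual-visibility number and the dual mutual-visibility number of the glued binary tree GT(r) both equal 2^{r−1}. -/

import Mathlib

open SimpleGraph

/-- Two vertices `u` and `v` are `S`-visible: there exists a shortest `u,v`-path
whose intersection with `S` is contained in `{u, v}`. -/
def isVisible {V : Type*} (G : SimpleGraph V) (S : Set V) (u v : V) : Prop :=
  ∃ p : G.Walk u v, p.IsPath ∧ p.length = G.dist u v ∧
    ∀ w ∈ p.support, w ∈ S → w = u ∨ w = v

/-- Two vertices `u` and `v` are `S`-positionable: every shortest `u,v`-path
has its intersection with `S` contained in `{u, v}`. -/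
def isPositionable {V : Type*} (G : SimpleGraph V) (S : Set V) (u v : V) : Prop :=
  ∀ p : G.Walk u v, p.IsPath → p.length = G.dist u v →
    ∀ w ∈ p.support, w ∈ S → w = u ∨ w = v

def isMVSet {V : Type*} (G : SimpleGraph V) (S : Set V) : Prop :=
  ∀ u ∈ S, ∀ v ∈ S, isVisible G S u v

def isOuterMVSet {V : Type*} (G : SimpleGraph V) (S : Set V) : Prop :=
  isMVSet G S ∧ ∀ u ∈ S, ∀ v ∉ S, isVisible G S u v

def isDualMVSet {V : Type*} (G : SimpleGraph V) (S : Set V) : Prop :=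
  isMVSet G S ∧ ∀ u ∉ S, ∀ v ∉ S, isVisible G S u v

def isTotalMVSet {V : Type*} (G : SimpleGraph V) (S : Set V) : Prop :=
  ∀ u v : V, isVisible G S u v

def isGPSet {V : Type*} (G : SimpleGraph V) (S : Set V) : Prop :=
  ∀ u ∈ S, ∀ v ∈ S, isPositionable G S u v

def isOuterGPSet {V : Type*} (G : SimpleGraph V) (S : Set V) : Prop :=
  isGPSet G S ∧ ∀ u ∈ S, ∀ v ∉ S, isPositionable G S u v

def isDualGPSet {V : Type*} (G : SimpleGraph V) (S : Set V) : Prop :=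
  isGPSet G S ∧ ∀ u ∉ S, ∀ v ∉ S, isPositionable G S u v

def isTotalGPSet {V : Type*} (G : SimpleGraph V) (S : Set V) : Prop :=
  ∀ u v : V, isPositionable G S u v

/-- Vertices of the generalized glued `t`-ary tree obtained from `n` copies of
the perfect `t`-ary tree of depth `r`: an internal vertex of copy `i` is encoded
as the list of child-choices from the root (length `< r`), and a quasi-leaf
(identified leaf) is encoded as such a list of length exactly `r`. -/
abbrev gluedVert (r n t : ℕ) : Type :=
  (Fin n × {l : List (Fin t) // l.length < r}) ⊕ {l : List (Fin t) // l.length = r}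

def gluedAdj (r n t : ℕ) : gluedVert r n t → gluedVert r n t → Prop
  | Sum.inl (i, s), Sum.inl (j, s') => i = j ∧ ∃ b, s'.val = s.val ++ [b]
  | Sum.inl (_, s), Sum.inr l => ∃ b, l.val = s.val ++ [b]
  | Sum.inr _, _ => False

/-- The generalized glued `t`-ary tree on `n` copies of the perfect `t`-ary tree
of depth `r`.  `gluedTree r 2 2` is the glued binary tree `GT(r)`,
`gluedTree r 2 t` is the glued `t`-ary tree `GT(r,t)`, and `gluedTree r n 2`
is the generalized glued binary tree `GT_r^(n)`. -/
def gluedTree (r n t : ℕ) : SimpleGraph (gluedVert r n t) :=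
  SimpleGraph.fromRel (gluedAdj r n t)

/-- The set of quasi-leaves. -/
def quasiLeaves (r n t : ℕ) : Set (gluedVert r n t) := {x | ∃ l, x = Sum.inr l}

/-- The vertex set of the `i`-th copy `T_r^(i)` of the perfect `t`-ary tree
(its internal vertices together with all quasi-leaves). -/
def copySet (r n t : ℕ) (i : Fin n) : Set (gluedVert r n t) :=
  {x | (∃ s, x = Sum.inl (i, s)) ∨ x ∈ quasiLeaves r n t}

namespace GTProof

def lcp : List (Fin 2) → List (Fin 2) → ℕ
  | a :: s, b :: t => if a = b then lcp s t + 1 else 0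
  | _, _ => 0

@[simp] theorem lcp_nil_left (t : List (Fin 2)) : lcp [] t = 0 := by cases t <;> rfl
@[simp] theorem lcp_nil_right (s : List (Fin 2)) : lcp s [] = 0 := by cases s <;> rfl
theorem lcp_cons (a b : Fin 2) (s t : List (Fin 2)) :
    lcp (a :: s) (b :: t) = if a = b then lcp s t + 1 else 0 := rfl

theorem lcp_le_left : ∀ s t : List (Fin 2), lcp s t ≤ s.length
  | [], _ => by simp
  | _ :: _, [] => by simp
  | a :: s, b :: t => by
    rw [lcp_cons]; split
    · simpa using lcp_le_left s t
    · simp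

theorem lcp_comm : ∀ s t : List (Fin 2), lcp s t = lcp t s
  | [], t => by simp
  | _ :: _, [] => by simp
  | a :: s, b :: t => by
    rw [lcp_cons, lcp_cons, lcp_comm s t]
    by_cases h : a = b
    · simp [h]
    · simp [h, Ne.symm h]

theorem lcp_le_right (s t : List (Fin 2)) : lcp s t ≤ t.length := lcp_comm s t ▸ lcp_le_left t s

theorem lcp_append : ∀ (p s t : List (Fin 2)), lcp (p ++ s) (p ++ t) = p.length + lcp s t
  | [], s, t => by simp
  | a :: p, s, t => by simp [lcp_cons, lcp_append p s t]; omega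

@[simp] theorem lcp_self (s : List (Fin 2)) : lcp s s = s.length := by
  simpa using lcp_append s [] []

theorem lcp_mono : ∀ (t s e : List (Fin 2)), lcp t s ≤ lcp t (s ++ e)
  | [], _, _ => by simp
  | _ :: _, [], _ => by simp
  | a :: t, b :: s, e => by
    rw [List.cons_append, lcp_cons, lcp_cons]
    split
    · simpa using lcp_mono t s e
    · simp

/-- If appending grows the lcp, the old lcp was full. -/
theorem lcp_append_of_lt : ∀ (t s e : List (Fin 2)), lcp t s < lcp t (s ++ e) →
    lcp t s = s.length
  | [], s, e => by simp
  | _ :: _, [], _ => by simp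
  | a :: t, b :: s, e => by
    rw [List.cons_append, lcp_cons, lcp_cons]
    split
    · intro h
      have := lcp_append_of_lt t s e (by omega)
      simp [this]
    · omega

theorem lcp_append_le (t s e : List (Fin 2)) : lcp t (s ++ e) ≤ lcp t s + e.length := by
  rcases Nat.lt_or_ge (lcp t s) (lcp t (s ++ e)) with h | h
  · have h2 := lcp_append_of_lt t s e h
    have := lcp_le_right t (s ++ e)
    simp at this; omega
  · omega

theorem lcp_snoc (t s : List (Fin 2)) (b : Fin 2) :
    lcp t (s ++ [b]) = lcp t s ∨
      (lcp t s = s.length ∧ lcp t (s ++ [b]) = s.length + 1 ∧ s.length + 1 ≤ t.length) := by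
  rcases Nat.lt_or_ge (lcp t s) (lcp t (s ++ [b])) with h | h
  · have h2 := lcp_append_of_lt t s [b] h
    have h3 := lcp_append_le t s [b]
    have h4 := lcp_le_left t (s ++ [b])
    have h5 := lcp_le_right t (s ++ [b])
    simp at h3 h5
    right; omega
  · left; have := lcp_mono t s [b]; omega

theorem lcp_append_of_le (t s e : List (Fin 2)) (h : t.length ≤ s.length) :
    lcp t (s ++ e) = lcp t s := by
  rcases Nat.lt_or_ge (lcp t s) (lcp t (s ++ e)) with hlt | hge
  · have h2 := lcp_append_of_lt t s e hlt
    have h3 := lcp_le_left t (s ++ e)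
    have h4 := lcp_le_right t (s ++ e)
    omega
  · have := lcp_mono t s e; omega

theorem lcp_take : ∀ (s t : List (Fin 2)), s.take (lcp s t) = t.take (lcp s t)
  | [], t => by simp
  | _ :: _, [] => by simp
  | a :: s, b :: t => by
    rw [lcp_cons]
    split
    · next h => simp [h, lcp_take s t]
    · simp

theorem snoc_inj {s t : List (Fin 2)} {a b : Fin 2} (h : s ++ [a] = t ++ [b]) :
    s = t ∧ a = b := by
  have h1 := congrArg List.dropLast h
  have h2 := congrArg List.getLast? h
  simp at h1 h2
  exact ⟨h1, h2⟩

-- assume defs from statement file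
variable {r : ℕ}
abbrev V2 (r : ℕ) := gluedVert r 2 2

def lst : V2 r → List (Fin 2)
  | .inl (_, s) => s.val
  | .inr l => l.val

def cpy : V2 r → Option (Fin 2)
  | .inl (i, _) => some i
  | .inr _ => none

@[simp] theorem lst_inl (i : Fin 2) (s) : lst (r := r) (.inl (i, s)) = s.val := rfl
@[simp] theorem lst_inr (l) : lst (r := r) (.inr l) = l.val := rfl
@[simp] theorem cpy_inl (i : Fin 2) (s) : cpy (r := r) (.inl (i, s)) = some i := rfl
@[simp] theorem cpy_inr (l) : cpy (r := r) (.inr l) = none := rfl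

theorem lst_length_le (u : V2 r) : (lst u).length ≤ r := by
  cases u with
  | inl p => exact le_of_lt p.2.2
  | inr l => exact le_of_eq l.2

theorem lst_length_lt {u : V2 r} (h : cpy u ≠ none) : (lst u).length < r := by
  cases u with
  | inl p => exact p.2.2
  | inr l => simp at h

theorem lst_length_eq {u : V2 r} (h : cpy u = none) : (lst u).length = r := by
  cases u with
  | inl p => obtain ⟨i, s⟩ := p; simp at h
  | inr l => exact l.2

theorem ext_lst_cpy {u v : V2 r} (h1 : lst u = lst v) (h2 : cpy u = cpy v) : u = v := by
  cases u with
  | inl p =>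
    cases v with
    | inl q =>
      obtain ⟨i, s⟩ := p; obtain ⟨j, t⟩ := q
      simp at h1 h2; subst h2
      simp [Subtype.ext h1]
    | inr l => obtain ⟨i, s⟩ := p; simp at h2
  | inr l =>
    cases v with
    | inl q => obtain ⟨i, s⟩ := q; simp at h2
    | inr l' => simp at h1; simp [Subtype.ext h1]

theorem ne_of_lst_ne {u v : V2 r} (h : lst u ≠ lst v) : u ≠ v := fun he => h (he ▸ rfl)

/-- adjacency characterization -/
theorem adj_iff {x y : V2 r} : (gluedTree r 2 2).Adj x y ↔
    (∃ b, lst y = lst x ++ [b] ∧ cpy x ≠ none ∧ (cpy y = cpy x ∨ cpy y = none)) ∨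
    (∃ b, lst x = lst y ++ [b] ∧ cpy y ≠ none ∧ (cpy x = cpy y ∨ cpy x = none)) := by
  constructor
  · intro h
    rw [gluedTree, SimpleGraph.fromRel_adj] at h
    obtain ⟨hne, h | h⟩ := h
    · cases x with
      | inl p =>
        obtain ⟨i, s⟩ := p
        cases y with
        | inl q =>
          obtain ⟨j, t⟩ := q
          obtain ⟨hij, b, hb⟩ := h
          exact Or.inl ⟨b, by simp [hb, hij]⟩
        | inr l =>
          obtain ⟨b, hb⟩ := h
          exact Or.inl ⟨b, by simp [hb]⟩
      | inr l => exact absurd h (by cases y <;> simp [gluedAdj])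
    · cases y with
      | inl p =>
        obtain ⟨i, s⟩ := p
        cases x with
        | inl q =>
          obtain ⟨j, t⟩ := q
          obtain ⟨hij, b, hb⟩ := h
          exact Or.inr ⟨b, by simp [hb, hij]⟩
        | inr l =>
          obtain ⟨b, hb⟩ := h
          exact Or.inr ⟨b, by simp [hb]⟩
      | inr l => exact absurd h (by cases x <;> simp [gluedAdj])
  · intro h
    rw [gluedTree, SimpleGraph.fromRel_adj]
    have hne : ∀ {u v : V2 r} (b : Fin 2), lst v = lst u ++ [b] → u ≠ v := by
      intro u v b hb
      apply ne_of_lst_ne; intro he; rw [he] at hb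
      have := congrArg List.length hb; simp at this
    obtain ⟨b, hb, hx, hy⟩ | ⟨b, hb, hy, hx⟩ := h
    · refine ⟨hne b hb, Or.inl ?_⟩
      cases x with
      | inl p =>
        obtain ⟨i, s⟩ := p
        cases y with
        | inl q =>
          obtain ⟨j, t⟩ := q
          simp at hb hy ⊢
          exact ⟨hy.symm, b, hb⟩
        | inr l => exact ⟨b, hb⟩
      | inr l => simp at hx
    · refine ⟨(hne b hb).symm, Or.inr ?_⟩
      cases y with
      | inl p =>
        obtain ⟨i, s⟩ := p
        cases x with
        | inl q =>
          obtain ⟨j, t⟩ := q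
          simp at hb hx ⊢
          exact ⟨hx.symm, b, hb⟩
        | inr l => exact ⟨b, hb⟩
      | inr l => simp at hy

/-- Candidate distance function. -/
def D (r : ℕ) (u v : V2 r) : ℕ :=
  ((lst u).length - lcp (lst u) (lst v)) + ((lst v).length - lcp (lst u) (lst v)) +
    (if cpy u ≠ none ∧ cpy v ≠ none ∧ cpy u ≠ cpy v then
      2 * (r - max (lst u).length (lst v).length) else 0)

theorem D_self (u : V2 r) : D r u u = 0 := by
  simp [D]

theorem D_comm (u v : V2 r) : D r u v = D r v u := by
  unfold D
  rw [lcp_comm (lst v) (lst u), max_comm (lst v).length (lst u).length]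
  have : (cpy u ≠ none ∧ cpy v ≠ none ∧ cpy u ≠ cpy v) ↔
      (cpy v ≠ none ∧ cpy u ≠ none ∧ cpy v ≠ cpy u) := by tauto
  rw [if_congr this rfl rfl]
  omega

theorem D_step1 {x y : V2 r} (u : V2 r) (b : Fin 2) (hb : lst y = lst x ++ [b])
    (hx : cpy x ≠ none) (hy : cpy y = cpy x ∨ cpy y = none) :
    D r u y ≤ D r u x + 1 ∧ D r u x ≤ D r u y + 1 := by
  have hc := lcp_snoc (lst u) (lst x) b
  have h1 := lcp_le_left (lst u) (lst x)
  have h2 := lcp_le_right (lst u) (lst x)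
  have h1' := lcp_le_left (lst u) (lst x ++ [b])
  have h2' := lcp_le_right (lst u) (lst x ++ [b])
  have h3 := lst_length_le u
  have h4 := lst_length_lt hx
  obtain ⟨i, hi⟩ := Option.ne_none_iff_exists'.mp hx
  unfold D
  rw [hb, hi]
  simp only [List.length_append, List.length_cons, List.length_nil] at *
  rcases hcu : cpy u with _ | j
  · simp only [hcu, ne_eq, not_true_eq_false, false_and, if_false]
    omega
  · have h5 : (lst u).length < r := lst_length_lt (by simp [hcu])
    rcases hy with hy | hy
    · rw [hy, hi]
      by_cases hji : j = i
      · rw [if_neg (by simp [hji]), if_neg (by simp [hji])]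
        omega
      · rw [if_pos ⟨by simp, by simp, by simp [hji]⟩,
            if_pos ⟨by simp, by simp, by simp [hji]⟩]
        omega
    · rw [hy]
      have h6 : (lst x).length + 1 = r := by
        have := lst_length_eq hy; rw [hb] at this; simp at this; omega
      rw [if_neg (by simp)]
      by_cases hji : j = i
      · rw [if_neg (by simp [hji])]
        omega
      · rw [if_pos ⟨by simp, by simp, by simp [hji]⟩]
        omega

theorem D_step {x y : V2 r} (u : V2 r) (h : (gluedTree r 2 2).Adj x y) :
    D r u y ≤ D r u x + 1 ∧ D r u x ≤ D r u y + 1 := by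
  rcases adj_iff.mp h with ⟨b, hb, hx, hy⟩ | ⟨b, hb, hy, hx⟩
  · exact D_step1 u b hb hx hy
  · exact (D_step1 u b hb hy hx).symm

theorem D_le_length (u v : V2 r) (p : (gluedTree r 2 2).Walk u v) : D r u v ≤ p.length := by
  induction p with
  | nil => simp [D_self]
  | @cons a c d h q ih =>
    have h1 : D r d a ≤ D r d c + 1 := (D_step d (by exact h)).2
    rw [SimpleGraph.Walk.length_cons]
    have h2 : D r a d = D r d a := D_comm a d
    have h3 : D r d c = D r c d := D_comm d c
    omega

/-- make a vertex from copy index and list (junk if too long) -/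
def mk (i : Fin 2) (l : List (Fin 2)) : V2 r :=
  if h : l.length < r then .inl (i, ⟨l, h⟩)
  else if h' : l.length = r then .inr ⟨l, h'⟩
  else .inr ⟨List.replicate r 0, by simp⟩

theorem mk_inl {l : List (Fin 2)} (i : Fin 2) (h : l.length < r) :
    mk i l = Sum.inl (i, ⟨l, h⟩) := by simp [mk, h]

theorem mk_inr {l : List (Fin 2)} (i : Fin 2) (h : l.length = r) :
    mk i l = Sum.inr ⟨l, h⟩ := by
  have : ¬ l.length < r := by omega
  simp [mk, this, h]

theorem lst_mk {l : List (Fin 2)} (i : Fin 2) (h : l.length ≤ r) : lst (mk (r := r) i l) = l := by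
  rcases Nat.lt_or_ge l.length r with h' | h'
  · rw [mk_inl i h']; rfl
  · rw [mk_inr i (by omega)]; rfl

theorem mk_lst (u : V2 r) (i : Fin 2) (h : cpy u = some i ∨ cpy u = none) : mk i (lst u) = u := by
  cases u with
  | inl p =>
    obtain ⟨j, s⟩ := p
    simp at h
    rw [lst_inl, mk_inl i s.2]
    simp [← h]
  | inr l => rw [lst_inr, mk_inr i l.2]

theorem adj_mk {l : List (Fin 2)} (i : Fin 2) (b : Fin 2) (h : l.length + 1 ≤ r) :
    (gluedTree r 2 2).Adj (mk i l) (mk i (l ++ [b])) := by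
  have hl : l.length < r := by omega
  have hl2 : (l ++ [b]).length ≤ r := by simp; omega
  apply adj_iff.mpr
  left
  refine ⟨b, ?_, ?_, ?_⟩
  · rw [lst_mk i hl2, lst_mk i (by omega)]
  · rw [mk_inl i hl]; simp
  · rcases Nat.lt_or_ge (l.length + 1) r with h' | h'
    · left
      rw [mk_inl i hl, mk_inl (l := l ++ [b]) i (by simp; omega)]
      rfl
    · right
      rw [mk_inr (l := l ++ [b]) i (by simp; omega)]
      rfl

/-- walk going down from `mk i l` along extension `e` -/
def walkDown (i : Fin 2) : (e : List (Fin 2)) → (l : List (Fin 2)) →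
    (h : l.length + e.length ≤ r) → (gluedTree r 2 2).Walk (mk i l) (mk i (l ++ e))
  | [], l, _ => SimpleGraph.Walk.nil.copy rfl (by rw [List.append_nil])
  | b :: e, l, h =>
    ((adj_mk i b (by simp at h; omega)).toWalk.append
      (walkDown i e (l ++ [b]) (by simp at h ⊢; omega))).copy rfl
      (by rw [List.append_assoc]; rfl)

theorem walkDown_length (i : Fin 2) : ∀ (e l : List (Fin 2)) (h : l.length + e.length ≤ r),
    (walkDown i e l h).length = e.length
  | [], l, h => by simp [walkDown]
  | b :: e, l, h => by
    simp [walkDown, walkDown_length i e (l ++ [b])]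

theorem walkDown_support (i : Fin 2) : ∀ (e l : List (Fin 2)) (h : l.length + e.length ≤ r),
    ∀ x ∈ (walkDown i e l h).support, ∃ k ≤ e.length, x = mk i (l ++ e.take k)
  | [], l, h => by
    intro x hx
    simp [walkDown] at hx
    exact ⟨0, by simp, by simpa using hx⟩
  | b :: e, l, h => by
    intro x hx
    simp [walkDown] at hx
    rcases hx with hx | hx
    · exact ⟨0, by simp, by simpa using hx⟩
    · obtain ⟨k, hk, hx⟩ := walkDown_support i e (l ++ [b]) (by simp at h ⊢; omega) x hx
      refine ⟨k + 1, by simp; omega, ?_⟩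
      rw [hx, List.append_assoc]
      rfl

theorem mk_eq_mk_r {l : List (Fin 2)} (i j : Fin 2) (h : l.length = r) :
    mk (r := r) i l = mk j l := by rw [mk_inr i h, mk_inr j h]

/-- walk within copy i from `mk i a` up to the common prefix and down to `mk i b` -/
def goUpDown (i : Fin 2) (a b : List (Fin 2)) (ha : a.length ≤ r) (hb : b.length ≤ r) :
    (gluedTree r 2 2).Walk (mk i a) (mk i b) :=
  (((walkDown i (a.drop (lcp a b)) (a.take (lcp a b))
      (by rw [List.length_take, List.length_drop]; omega)).copy rfl
      (by rw [List.take_append_drop])).reverse).append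
   ((walkDown i (b.drop (lcp a b)) (b.take (lcp a b))
      (by rw [List.length_take, List.length_drop]; omega)).copy
      (by rw [lcp_take a b]) (by rw [List.take_append_drop]))

theorem goUpDown_length (i : Fin 2) (a b : List (Fin 2)) (ha : a.length ≤ r) (hb : b.length ≤ r) :
    (goUpDown i a b ha hb).length = (a.length - lcp a b) + (b.length - lcp a b) := by
  simp [goUpDown, walkDown_length]

theorem goUpDown_support (i : Fin 2) (a b : List (Fin 2)) (ha : a.length ≤ r) (hb : b.length ≤ r) :
    ∀ x ∈ (goUpDown i a b ha hb).support,
      ∃ k, x = mk i (a.take k) ∨ x = mk i (b.take k) := by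
  intro x hx
  simp only [goUpDown, SimpleGraph.Walk.mem_support_append_iff,
    SimpleGraph.Walk.support_reverse, List.mem_reverse, SimpleGraph.Walk.support_copy] at hx
  rcases hx with hx | hx
  · obtain ⟨k, hk, hx⟩ := walkDown_support i _ _ _ x hx
    refine ⟨lcp a b + k, Or.inl ?_⟩
    rw [hx, List.take_add]
  · obtain ⟨k, hk, hx⟩ := walkDown_support i _ _ _ x hx
    refine ⟨lcp a b + k, Or.inr ?_⟩
    rw [hx, List.take_add]

theorem cpy_mk_take {a : List (Fin 2)} (i : Fin 2) (k : ℕ) (h : a.length < r) :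
    cpy (mk (r := r) i (a.take k)) ≠ none := by
  have : (a.take k).length < r := by rw [List.length_take]; omega
  rw [mk_inl i this]
  simp

/-- support elements of goUpDown-walk are endpoints or internal, when lists are ≤ r and
    full-length lists give the endpoints -/
theorem mk_take_cases {a : List (Fin 2)} (i : Fin 2) (k : ℕ) (h : a.length ≤ r) :
    mk (r := r) i (a.take k) = mk i a ∨ cpy (mk (r := r) i (a.take k)) ≠ none := by
  rcases Nat.lt_or_ge (a.take k).length r with h' | h'
  · right; rw [mk_inl i h']; simp
  · left
    have h1 : (a.take k).length ≤ a.length := by rw [List.length_take]; omega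
    have h2 : a.take k = a := by
      have : a.length ≤ k := by rw [List.length_take] at h'; omega
      exact List.take_of_length_le this
    rw [h2]

theorem ends_one {s : List (Fin 2)} {m : ℕ} (i : Fin 2) (h : s.length + m = r) (hm : 1 ≤ m) :
    ∃ l hh, mk (r := r) i (s ++ List.replicate m 1) = Sum.inr ⟨l ++ [(1 : Fin 2)], hh⟩ := by
  have hlen : (s ++ List.replicate m 1).length = r := by simp; omega
  have hrep : List.replicate m (1 : Fin 2) = List.replicate (m - 1) 1 ++ [1] := by
    have : m = (m - 1) + 1 := by omega
    rw [this, List.replicate_succ']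
    congr 2
  refine ⟨s ++ List.replicate (m - 1) 1, ?_, ?_⟩
  · rw [List.append_assoc, ← hrep]; exact hlen
  · rw [mk_inr i hlen]
    congr 1
    apply Subtype.ext
    simp [hrep]

/-- support elements we allow: endpoints, internal vertices, or leaves ending in 1 -/
def Good (u v x : V2 r) : Prop :=
  x = u ∨ x = v ∨ cpy x ≠ none ∨ ∃ l hh, x = Sum.inr ⟨l ++ [(1 : Fin 2)], hh⟩

theorem good_comm {u v x : V2 r} (h : Good u v x) : Good v u x := by
  unfold Good at *; tauto

theorem exists_good_walk_cross {u v : V2 r} {i j : Fin 2} (hu : cpy u = some i)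
    (hv : cpy v = some j) (hij : i ≠ j) (hlen : (lst v).length ≤ (lst u).length) :
    ∃ p : (gluedTree r 2 2).Walk u v, p.length = D r u v ∧ ∀ x ∈ p.support, Good u v x := by
  have hs : (lst u).length < r := lst_length_lt (by simp [hu])
  have ht : (lst v).length < r := lst_length_lt (by simp [hv])
  set s := lst u with hsdef
  set t := lst v with htdef
  set m := r - s.length with hm
  set L := s ++ List.replicate m 1 with hLdef
  have hL : L.length = r := by simp [hLdef]; omega
  have hpad : s.length + (List.replicate m (1 : Fin 2)).length ≤ r := by simp; omega
  let p1 : (gluedTree r 2 2).Walk u (mk i L) :=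
    (walkDown i (List.replicate m 1) s hpad).copy (mk_lst u i (Or.inl hu)) rfl
  let p2 : (gluedTree r 2 2).Walk (mk i L) v :=
    (goUpDown j L t (le_of_eq hL) (lst_length_le v)).copy
      (mk_eq_mk_r j i hL) (mk_lst v j (Or.inl hv))
  have hc' : lcp L t = lcp s t := by
    rw [lcp_comm L t, hLdef, lcp_append_of_le t s _ hlen, lcp_comm]
  have hc1 := lcp_le_left s t
  have hc2 := lcp_le_right s t
  refine ⟨p1.append p2, ?_, ?_⟩
  · have e1 : p1.length = m := by
      simp only [p1, SimpleGraph.Walk.length_copy, walkDown_length, List.length_replicate]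
    have e2 : p2.length = (L.length - lcp L t) + (t.length - lcp L t) := by
      simp only [p2, SimpleGraph.Walk.length_copy, goUpDown_length]
    rw [SimpleGraph.Walk.length_append, e1, e2, hc', hL]
    unfold D
    rw [if_pos ⟨by simp [hu], by simp [hv], by simp [hu, hv, hij]⟩]
    rw [← hsdef, ← htdef]
    omega
  · intro x hx
    rw [SimpleGraph.Walk.mem_support_append_iff] at hx
    rcases hx with hx | hx
    · rw [SimpleGraph.Walk.support_copy] at hx
      obtain ⟨k, hk, hxk⟩ := walkDown_support i _ _ _ x hx
      rcases Nat.lt_or_ge (s ++ (List.replicate m (1:Fin 2)).take k).length r with h' | h'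
      · right; right; left
        rw [hxk, mk_inl i h']; simp
      · -- full length: it is L, a leaf ending in 1
        have hkm : k = m := by
          simp only [List.length_append, List.length_take, List.length_replicate] at h'
          omega
        have hrm : (List.replicate m (1:Fin 2)).take k = List.replicate m 1 := by
          rw [hkm]; simp
        have hm1 : 1 ≤ m := by omega
        right; right; right
        rw [hxk, hrm]
        exact ends_one i (by omega) hm1
    · rw [SimpleGraph.Walk.support_copy] at hx
      obtain ⟨k, hk⟩ := goUpDown_support j _ _ _ _ x hx
      rcases hk with hk | hk
      · rcases mk_take_cases j k (le_of_eq hL) with hc | hc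
        · right; right; right
          rw [hk, hc]
          exact ends_one j (by omega) (by omega)
        · right; right; left; rw [hk]; exact hc
      · rcases mk_take_cases j k (lst_length_le v) with hc | hc
        · right; left
          rw [hk, hc, mk_lst v j (Or.inl hv)]
        · right; right; left; rw [hk]; exact hc

theorem exists_good_walk (u v : V2 r) :
    ∃ p : (gluedTree r 2 2).Walk u v, p.length = D r u v ∧ ∀ x ∈ p.support, Good u v x := by
  by_cases hcross : cpy u ≠ none ∧ cpy v ≠ none ∧ cpy u ≠ cpy v
  · obtain ⟨hu', hv', huv⟩ := hcross
    obtain ⟨i, hu⟩ := Option.ne_none_iff_exists'.mp hu'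
    obtain ⟨j, hv⟩ := Option.ne_none_iff_exists'.mp hv'
    have hij : i ≠ j := by rintro rfl; rw [hu, hv] at huv; exact huv rfl
    rcases Nat.le_total (lst v).length (lst u).length with hle | hle
    · exact exists_good_walk_cross hu hv hij hle
    · obtain ⟨p, h1, h2⟩ := exists_good_walk_cross hv hu (Ne.symm hij) hle
      refine ⟨p.reverse, ?_, ?_⟩
      · rw [SimpleGraph.Walk.length_reverse, h1, D_comm]
      · intro x hx
        rw [SimpleGraph.Walk.support_reverse, List.mem_reverse] at hx
        exact good_comm (h2 x hx)
  · -- same copy (or leaf endpoints) : up-down walk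
    have key : ∃ i : Fin 2, (cpy u = some i ∨ cpy u = none) ∧ (cpy v = some i ∨ cpy v = none) := by
      rcases hu : cpy u with _ | i
      · rcases hv : cpy v with _ | j
        · exact ⟨0, Or.inr rfl, Or.inr rfl⟩
        · exact ⟨j, Or.inr rfl, Or.inl rfl⟩
      · rcases hv : cpy v with _ | j
        · exact ⟨i, Or.inl rfl, Or.inr rfl⟩
        · refine ⟨i, Or.inl rfl, Or.inl ?_⟩
          have : cpy u = cpy v := by
            by_contra hne
            exact hcross ⟨by simp [hu], by simp [hv], hne⟩
          rw [hu, hv] at this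
          exact this.symm
    obtain ⟨i, hui, hvi⟩ := key
    refine ⟨(goUpDown i (lst u) (lst v) (lst_length_le u) (lst_length_le v)).copy
      (mk_lst u i hui) (mk_lst v i hvi), ?_, ?_⟩
    · rw [SimpleGraph.Walk.length_copy, goUpDown_length]
      unfold D
      rw [if_neg hcross, Nat.add_zero]
    · intro x hx
      rw [SimpleGraph.Walk.support_copy] at hx
      obtain ⟨k, hk⟩ := goUpDown_support i _ _ _ _ x hx
      rcases hk with hk | hk
      · rcases mk_take_cases i k (lst_length_le u) with hc | hc
        · left; rw [hk, hc, mk_lst u i hui]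
        · right; right; left; rw [hk]; exact hc
      · rcases mk_take_cases i k (lst_length_le v) with hc | hc
        · right; left; rw [hk, hc, mk_lst v i hvi]
        · right; right; left; rw [hk]; exact hc

theorem reachable (u v : V2 r) : (gluedTree r 2 2).Reachable u v :=
  ⟨(exists_good_walk u v).choose⟩

theorem dist_eq_D (u v : V2 r) : (gluedTree r 2 2).dist u v = D r u v := by
  obtain ⟨p, hlen, -⟩ := exists_good_walk u v
  have h1 : (gluedTree r 2 2).dist u v ≤ D r u v := hlen ▸ SimpleGraph.dist_le p
  obtain ⟨q, hq⟩ := (reachable u v).exists_walk_length_eq_dist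
  have h2 := D_le_length u v q
  omega

theorem visible_of_walk {V : Type*} [DecidableEq V] {G : SimpleGraph V} {S : Set V} {u v : V}
    (p : G.Walk u v) (hlen : p.length = G.dist u v)
    (h : ∀ w ∈ p.support, w ∈ S → w = u ∨ w = v) : isVisible G S u v := by
  refine ⟨p.bypass, p.bypass_isPath, ?_, ?_⟩
  · have h1 := p.length_bypass_le
    have h2 := SimpleGraph.dist_le p.bypass
    omega
  · intro w hw hwS
    exact h w (p.support_bypass_subset hw) hwS

/-- The leaves ending in 0: one from each twin pair. -/
def S0 (r : ℕ) : Set (V2 r) :=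
  {x | ∃ (l : List (Fin 2)) (hh : (l ++ [(0 : Fin 2)]).length = r), x = Sum.inr ⟨l ++ [0], hh⟩}

theorem S0_total : ∀ u v : V2 r, isVisible (gluedTree r 2 2) (S0 r) u v := by
  intro u v
  obtain ⟨p, hlen, hsupp⟩ := exists_good_walk u v
  refine visible_of_walk p (by rw [hlen, dist_eq_D]) ?_
  intro w hw hwS
  obtain ⟨l, hh, hl⟩ := hwS
  rcases hsupp w hw with h | h | h | ⟨l', hh', h⟩
  · exact Or.inl h
  · exact Or.inr h
  · rw [hl] at h; simp at h
  · rw [hl] at h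
    have := congrArg lst h
    simp at this

theorem S0_ncard (hr : 1 ≤ r) : (S0 r).ncard = 2 ^ (r - 1) := by
  have hlen : ∀ l : List.Vector (Fin 2) (r - 1), (l.val ++ [(0 : Fin 2)]).length = r := by
    intro l; simp [l.prop]; omega
  let f : List.Vector (Fin 2) (r - 1) → V2 r := fun w => Sum.inr ⟨w.val ++ [0], hlen w⟩
  have hf : Function.Injective f := by
    intro a b hab
    simp only [f, Sum.inr.injEq, Subtype.mk.injEq] at hab
    exact Subtype.ext (snoc_inj hab).1
  have hS : S0 r = f '' Set.univ := by
    ext x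
    constructor
    · rintro ⟨l, hh, rfl⟩
      have hl : l.length = r - 1 := by
        have := hh; simp at this; omega
      exact ⟨⟨l, hl⟩, trivial, rfl⟩
    · rintro ⟨w, -, rfl⟩
      exact ⟨w.val, hlen w, rfl⟩
  rw [hS, Set.ncard_image_of_injective _ hf, Set.ncard_univ, Nat.card_eq_fintype_card,
    card_vector]
  simp

theorem fin2_cases {j j' k : Fin 2} (h : j ≠ j') : k = j ∨ k = j' := by
  fin_cases j <;> fin_cases j' <;> fin_cases k <;> simp_all

/-- generic: a pair whose every shortest-path middle vertex is blocked cannot be visible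
(length-2 case) -/
theorem blocked2 {S : Set (V2 r)} {u v : V2 r} (hd : (gluedTree r 2 2).dist u v = 2)
    (hmid : ∀ z, (gluedTree r 2 2).Adj u z → (gluedTree r 2 2).Adj z v →
      z ∈ S ∧ z ≠ u ∧ z ≠ v)
    (hvis : isVisible (gluedTree r 2 2) S u v) : False := by
  obtain ⟨p, hp, hlen, havoid⟩ := hvis
  rw [hd] at hlen
  have h1 : (gluedTree r 2 2).Adj u (p.getVert 1) := by
    have := p.adj_getVert_succ (i := 0) (by omega)
    simpa [p.getVert_zero] using this
  have h2 : (gluedTree r 2 2).Adj (p.getVert 1) v := by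
    have := p.adj_getVert_succ (i := 1) (by omega)
    rwa [show (1 : ℕ) + 1 = p.length by omega, p.getVert_length] at this
  obtain ⟨hzS, hzu, hzv⟩ := hmid _ h1 h2
  have hzsupp : p.getVert 1 ∈ p.support :=
    SimpleGraph.Walk.mem_support_iff_exists_getVert.mpr ⟨1, rfl, by omega⟩
  rcases havoid _ hzsupp hzS with h | h
  · exact hzu h
  · exact hzv h

/-- length-3 case -/
theorem blocked3 {S : Set (V2 r)} {u v : V2 r} (hd : (gluedTree r 2 2).dist u v = 3)
    (hmid : ∀ z1 z2, (gluedTree r 2 2).Adj u z1 → (gluedTree r 2 2).Adj z1 z2 →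
      (gluedTree r 2 2).Adj z2 v →
      (z1 ∈ S ∧ z1 ≠ u ∧ z1 ≠ v) ∨ (z2 ∈ S ∧ z2 ≠ u ∧ z2 ≠ v))
    (hvis : isVisible (gluedTree r 2 2) S u v) : False := by
  obtain ⟨p, hp, hlen, havoid⟩ := hvis
  rw [hd] at hlen
  have h1 : (gluedTree r 2 2).Adj u (p.getVert 1) := by
    have := p.adj_getVert_succ (i := 0) (by omega)
    simpa [p.getVert_zero] using this
  have h2 : (gluedTree r 2 2).Adj (p.getVert 1) (p.getVert 2) :=
    p.adj_getVert_succ (i := 1) (by omega)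
  have h3 : (gluedTree r 2 2).Adj (p.getVert 2) v := by
    have := p.adj_getVert_succ (i := 2) (by omega)
    rwa [show (2 : ℕ) + 1 = p.length by omega, p.getVert_length] at this
  rcases hmid _ _ h1 h2 h3 with ⟨hS, hu, hv⟩ | ⟨hS, hu, hv⟩
  · have hsupp : p.getVert 1 ∈ p.support :=
      SimpleGraph.Walk.mem_support_iff_exists_getVert.mpr ⟨1, rfl, by omega⟩
    rcases havoid _ hsupp hS with h | h
    · exact hu h
    · exact hv h
  · have hsupp : p.getVert 2 ∈ p.support :=
      SimpleGraph.Walk.mem_support_iff_exists_getVert.mpr ⟨2, rfl, by omega⟩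
    rcases havoid _ hsupp hS with h | h
    · exact hu h
    · exact hv h

theorem lcp_self_append (s e : List (Fin 2)) : lcp s (s ++ e) = s.length := by
  simpa using lcp_append s [] e

/-- distance when one vertex descends from the other (no copy change) -/
theorem dist_desc {u v : V2 r} (e : List (Fin 2)) (hv : lst v = lst u ++ e)
    (hpen : ¬(cpy u ≠ none ∧ cpy v ≠ none ∧ cpy u ≠ cpy v)) :
    (gluedTree r 2 2).dist u v = e.length := by
  rw [dist_eq_D]
  unfold D
  rw [if_neg hpen, hv, lcp_self_append]
  simp

/-- distance when the two vertices branch apart (no copy change) -/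
theorem dist_fork {u v : V2 r} (s e1 e2 : List (Fin 2)) (a b : Fin 2) (hab : a ≠ b)
    (hu : lst u = s ++ a :: e1) (hv : lst v = s ++ b :: e2)
    (hpen : ¬(cpy u ≠ none ∧ cpy v ≠ none ∧ cpy u ≠ cpy v)) :
    (gluedTree r 2 2).dist u v = e1.length + e2.length + 2 := by
  rw [dist_eq_D]
  unfold D
  rw [if_neg hpen, hu, hv, lcp_append]
  rw [lcp_cons, if_neg hab]
  simp
  omega

/-- distance when one descends from the other but copies differ -/
theorem dist_cross_desc {u v : V2 r} {i j : Fin 2} (e : List (Fin 2))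
    (hv : lst v = lst u ++ e) (hu' : cpy u = some i) (hv' : cpy v = some j) (hij : i ≠ j) :
    (gluedTree r 2 2).dist u v = e.length + 2 * (r - (lst u).length - e.length) := by
  have h1 : (lst v).length < r := lst_length_lt (by simp [hv'])
  rw [dist_eq_D]
  unfold D
  rw [if_pos ⟨by simp [hu'], by simp [hv'], by simp [hu', hv', hij]⟩, hv, lcp_self_append]
  simp only [List.length_append]
  rw [hv] at h1
  simp only [List.length_append] at h1
  omega

/-- middle vertex between u and a grandchild-type vertex v (lst v = lst u ++ [a,c]) -/
theorem mid_desc2 {u v z : V2 r} {i : Fin 2} (a c : Fin 2) (hv : lst v = lst u ++ [a, c])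
    (hu : cpy u = some i)
    (h1 : (gluedTree r 2 2).Adj u z) (h2 : (gluedTree r 2 2).Adj z v) :
    lst z = lst u ++ [a] ∧ cpy z = some i := by
  rcases adj_iff.mp h2 with ⟨d, hd, hzne, hcv⟩ | ⟨d, hd, hvne, hcz⟩
  · -- lst v = lst z ++ [d], cpy z ≠ none
    rw [hv] at hd
    have hd2 : (lst u ++ [a]) ++ [c] = lst z ++ [d] := by simpa using hd
    have hza : lst z = lst u ++ [a] := ((snoc_inj hd2).1).symm
    refine ⟨hza, ?_⟩
    rcases adj_iff.mp h1 with ⟨d', hd', hune, hcz'⟩ | ⟨d', hd', hzne', hcu'⟩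
    · -- lst z = lst u ++ [d'], cpy z = cpy u ∨ none
      rcases hcz' with h | h
      · rw [h, hu]
      · exact absurd h hzne
    · -- lst u = lst z ++ [d']
      exfalso
      rw [hza] at hd'
      have := congrArg List.length hd'; simp at this
  · -- lst z = lst v ++ [d]
    exfalso
    rw [hv] at hd
    rcases adj_iff.mp h1 with ⟨d', hd', _, _⟩ | ⟨d', hd', _, _⟩
    · -- lst z = lst u ++ [d']
      rw [hd'] at hd
      have := congrArg List.length hd; simp at this
    · -- lst u = lst z ++ [d']
      rw [hd] at hd'
      have := congrArg List.length hd'; simp at this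

/-- middle vertex between two sibling internal vertices -/
theorem mid_sib {u v z : V2 r} {i : Fin 2} {s : List (Fin 2)} (a b : Fin 2) (hab : a ≠ b)
    (hu : lst u = s ++ [a]) (hv : lst v = s ++ [b]) (hcu : cpy u = some i)
    (h1 : (gluedTree r 2 2).Adj u z) (h2 : (gluedTree r 2 2).Adj z v) :
    lst z = s ∧ cpy z = some i := by
  rcases adj_iff.mp h1 with ⟨d, hd, hune, hcz⟩ | ⟨d, hd, hzne, hcu'⟩
  · -- lst z = lst u ++ [d] : ruled out via second adjacency
    exfalso
    rw [hu] at hd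
    rcases adj_iff.mp h2 with ⟨d', hd', _, _⟩ | ⟨d', hd', _, _⟩
    · -- lst v = lst z ++ [d']
      rw [hv, hd] at hd'
      have := congrArg List.length hd'; simp at this
    · -- lst z = lst v ++ [d']
      rw [hd, hv] at hd'
      have hd2 : (s ++ [a]) ++ [d] = (s ++ [b]) ++ [d'] := by simpa using hd'
      exact hab (snoc_inj (snoc_inj hd2).1).2
  · -- lst u = lst z ++ [d]
    rw [hu] at hd
    have hza : lst z = s := ((snoc_inj hd.symm).1)
    refine ⟨hza, ?_⟩
    rcases hcu' with h | h
    · rw [← h, hcu]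
    · exact absurd h (by rw [hcu]; simp)

/-- middle vertex between same-list vertices in different copies -/
theorem mid_cross {u v z : V2 r} {i j : Fin 2} {s : List (Fin 2)}
    (hu : lst u = s) (hv : lst v = s) (hcu : cpy u = some i) (hcv : cpy v = some j)
    (hij : i ≠ j)
    (h1 : (gluedTree r 2 2).Adj u z) (h2 : (gluedTree r 2 2).Adj z v) :
    ∃ d, lst z = s ++ [d] ∧ cpy z = none := by
  rcases adj_iff.mp h1 with ⟨d, hd, hune, hcz⟩ | ⟨d, hd, hzne, hcu'⟩
  · -- lst z = lst u ++ [d] = s ++ [d]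
    rw [hu] at hd
    refine ⟨d, hd, ?_⟩
    rcases adj_iff.mp h2 with ⟨d', hd', hz', hcv'⟩ | ⟨d', hd', hvne, hcz'⟩
    · -- lst v = lst z ++ [d']
      exfalso
      rw [hv, hd] at hd'
      have := congrArg List.length hd'; simp at this
    · -- lst z = lst v ++ [d'], cpy z = cpy v ∨ cpy z = none
      rcases hcz' with h' | h'
      · rcases hcz with h | h
        · exfalso
          rw [h', hcv] at h
          rw [hcu] at h
          simp at h
          exact hij h.symm
        · exact h
      · exact h'
  · -- lst u = lst z ++ [d] : z is the parent; copy conflict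
    exfalso
    have hczi : cpy z = some i := by
      rcases hcu' with h | h
      · rw [← h, hcu]
      · rw [h] at hcu; simp at hcu
    rcases adj_iff.mp h2 with ⟨d', hd', hz', hcv'⟩ | ⟨d', hd', hvne, hcz'⟩
    · -- lst v = lst z ++ [d'], cpy v = cpy z ∨ cpy v = none
      rcases hcv' with h | h
      · rw [hcv, hczi] at h; simp at h; exact hij h.symm
      · rw [h] at hcv; simp at hcv
    · -- lst z = lst v ++ [d']
      rw [hu] at hd; rw [hv] at hd'
      rw [hd'] at hd
      have := congrArg List.length hd; simp at this

/-- neighbors of a leaf are the two parents -/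
theorem mid_twin {u z : V2 r} {s : List (Fin 2)} (a : Fin 2)
    (hu : lst u = s ++ [a]) (hcu : cpy u = none)
    (h1 : (gluedTree r 2 2).Adj u z) : lst z = s ∧ cpy z ≠ none := by
  rcases adj_iff.mp h1 with ⟨d, hd, hune, hcz⟩ | ⟨d, hd, hzne, hcu'⟩
  · exact absurd hcu hune
  · rw [hu] at hd
    exact ⟨((snoc_inj hd.symm).1), hzne⟩

/-- in a 3-chain from a grandchild u (lst = s++[a,e]) to a sibling v (lst = s++[b]),
the second middle vertex is the fork vertex (i, s). -/
theorem chain_fork {u v z1 z2 : V2 r} {i : Fin 2} {s : List (Fin 2)} (a b e : Fin 2)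
    (hab : a ≠ b) (hu : lst u = s ++ [a, e]) (hv : lst v = s ++ [b]) (hcv : cpy v = some i)
    (h1 : (gluedTree r 2 2).Adj u z1) (h2 : (gluedTree r 2 2).Adj z1 z2)
    (h3 : (gluedTree r 2 2).Adj z2 v) :
    lst z2 = s ∧ cpy z2 = some i := by
  rcases adj_iff.mp h3 with ⟨d, hd, hz2ne, hcv'⟩ | ⟨d, hd, hvne, hcz2⟩
  · -- lst v = lst z2 ++ [d]
    rw [hv] at hd
    refine ⟨(snoc_inj hd).1.symm, ?_⟩
    rcases hcv' with h | h
    · rw [hcv] at h; exact h.symm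
    · exact absurd h (by rw [hcv]; simp)
  · -- lst z2 = s ++ [b, d] : contradiction via z1
    exfalso
    rw [hv] at hd
    have hd2 : lst z2 = s ++ [b, d] := by simpa using hd
    have hz1 : (∃ d', lst z1 = s ++ [a, e, d']) ∨ lst z1 = s ++ [a] := by
      rcases adj_iff.mp h1 with ⟨d', hd', _, _⟩ | ⟨d', hd', _, _⟩
      · rw [hu] at hd'
        exact Or.inl ⟨d', by simpa using hd'⟩
      · rw [hu] at hd'
        have h5 : (s ++ [a]) ++ [e] = lst z1 ++ [d'] := by simpa using hd'
        exact Or.inr (snoc_inj h5).1.symm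
    rcases adj_iff.mp h2 with ⟨f, hf, _, _⟩ | ⟨f, hf, _, _⟩
    · -- lst z2 = lst z1 ++ [f]
      rcases hz1 with ⟨d', hz1⟩ | hz1
      · rw [hd2, hz1] at hf
        have := congrArg List.length hf; simp at this
      · rw [hd2, hz1] at hf
        have h5 : s ++ [b, d] = (s ++ [a]) ++ [f] := by simpa using hf
        have h6 : (s ++ [b]) ++ [d] = (s ++ [a]) ++ [f] := by simpa using h5
        exact hab ((snoc_inj (snoc_inj h6).1).2).symm
    · -- lst z1 = lst z2 ++ [f]
      rcases hz1 with ⟨d', hz1⟩ | hz1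
      · rw [hd2, hz1] at hf
        have h5 : s ++ [a, e, d'] = s ++ [b, d, f] := by simpa using hf
        have h6 := List.append_cancel_left h5
        simp at h6
        exact hab h6.1
      · rw [hd2, hz1] at hf
        have := congrArg List.length hf; simp at this

/-- in a 3-chain from u=(i,t) to v=(j,t++[a]) across copies (with t.length+2 = r),
the second middle vertex is a leaf below v. -/
theorem chain_cross {u v z1 z2 : V2 r} {i j : Fin 2} {t : List (Fin 2)} (a : Fin 2)
    (hij : i ≠ j) (hu : lst u = t) (hv : lst v = t ++ [a]) (hcu : cpy u = some i)
    (hcv : cpy v = some j) (hlen : t.length + 2 = r)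
    (h1 : (gluedTree r 2 2).Adj u z1) (h2 : (gluedTree r 2 2).Adj z1 z2)
    (h3 : (gluedTree r 2 2).Adj z2 v) :
    ∃ d, lst z2 = (t ++ [a]) ++ [d] ∧ cpy z2 = none := by
  have hz1c : cpy z1 = some i := by
    rcases adj_iff.mp h1 with ⟨d', hd', hune, hcz1⟩ | ⟨d', hd', hz1ne, hcu'⟩
    · rcases hcz1 with h | h
      · rw [h, hcu]
      · exfalso
        have := lst_length_eq h
        rw [hd', hu] at this
        simp at this; omega
    · rcases hcu' with h | h
      · rw [← h, hcu]
      · exact absurd h (by rw [hcu]; simp)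
  rcases adj_iff.mp h3 with ⟨d, hd, hz2ne, hcv'⟩ | ⟨d, hd, hvne, hcz2⟩
  · -- lst v = lst z2 ++ [d] : z2 is parent of v, contradiction via copies of z1
    exfalso
    have hz2l : lst z2 = t := by
      rw [hv] at hd
      exact (snoc_inj hd).1.symm
    have hz2c : cpy z2 = some j := by
      rcases hcv' with h | h
      · rw [hcv] at h; exact h.symm
      · exact absurd h (by rw [hcv]; simp)
    rcases adj_iff.mp h2 with ⟨f, hf, hz1ne, hcz2'⟩ | ⟨f, hf, hz2ne', hcz1'⟩
    · -- lst z2 = lst z1 ++ [f], cpy z2 = cpy z1 ∨ none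
      rcases hcz2' with h | h
      · rw [hz2c, hz1c] at h; simp at h; exact hij h.symm
      · rw [h] at hz2c; simp at hz2c
    · -- lst z1 = lst z2 ++ [f], cpy z1 = cpy z2 ∨ cpy z1 = none
      rcases hcz1' with h | h
      · rw [hz1c, hz2c] at h; simp at h; exact hij h
      · rw [h] at hz1c; simp at hz1c
  · -- lst z2 = (t ++ [a]) ++ [d]
    refine ⟨d, by rw [hd, hv], ?_⟩
    by_contra hne
    have := lst_length_lt hne
    rw [hd, hv] at this
    simp at this; omega

theorem fin2_other (b : Fin 2) : ∃ b', b' ≠ b := by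
  fin_cases b
  · exact ⟨1, by decide⟩
  · exact ⟨0, by decide⟩

theorem ne_len {u v : V2 r} (h : (lst u).length ≠ (lst v).length) : u ≠ v :=
  fun he => h (by rw [he])

section Upper

variable {S : Set (V2 r)}
  (hMV : ∀ u ∈ S, ∀ v ∈ S, isVisible (gluedTree r 2 2) S u v)
  (hOut : ∀ u ∉ S, ∀ v ∉ S, isVisible (gluedTree r 2 2) S u v)

include hMV hOut in
/-- no internal vertex of depth ≤ r-2 belongs to S -/
theorem no_shallow {i : Fin 2} {s : List (Fin 2)} (hsr : s.length + 2 ≤ r)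
    (hw : (Sum.inl (i, ⟨s, by omega⟩) : V2 r) ∈ S) : False := by
  set w : V2 r := Sum.inl (i, ⟨s, by omega⟩) with hwdef
  have hwl : lst w = s := rfl
  have hwc : cpy w = some i := rfl
  let c : Fin 2 → V2 r := fun a => Sum.inl (i, ⟨s ++ [a], by simp; omega⟩)
  have hcl : ∀ a, lst (c a) = s ++ [a] := fun a => rfl
  have hcc : ∀ a, cpy (c a) = some i := fun a => rfl
  have mixed : ∀ a b : Fin 2, a ≠ b → c a ∈ S → c b ∉ S → False := by
    intro a b hab hca hcb
    set g : V2 r := mk i (s ++ [a, 0]) with hgdef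
    have hglst : lst g = s ++ [a, 0] := lst_mk i (by simp; omega)
    have hgcpy : cpy g = some i ∨ cpy g = none := by
      rcases Nat.lt_or_ge (s ++ [a, 0]).length r with h | h
      · left; rw [hgdef, mk_inl i h]; rfl
      · right
        have hle : (s ++ [a, 0]).length = r := by
          have : (s ++ [a, 0]).length ≤ r := by simp; omega
          omega
        rw [hgdef, mk_inr i hle]; rfl
    by_cases hg : g ∈ S
    · refine blocked2 ?_ ?_ (hMV w hw g hg)
      · exact dist_desc [a, 0] (by rw [hglst]; rfl) (by
          rcases hgcpy with h | h <;> simp [hwc, h])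
      · intro z h1 h2
        obtain ⟨hzl, hzc⟩ := mid_desc2 a 0 (by rw [hglst]; rfl) hwc h1 h2
        rw [hwl] at hzl
        have hze : z = c a := ext_lst_cpy (by rw [hzl, hcl]) (by rw [hzc, hcc])
        refine ⟨hze ▸ hca, ?_, ?_⟩
        · apply ne_len; rw [hzl, hwl]; simp
        · apply ne_len; rw [hzl, hglst]; simp
    · refine blocked3 ?_ ?_ (hOut g hg (c b) hcb)
      · have := dist_fork (u := g) (v := c b) s [0] [] a b hab (by rw [hglst])
          (by rw [hcl]) (by rcases hgcpy with h | h <;> simp [hcc, h])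
        simpa using this
      · intro z1 z2 h1 h2 h3
        right
        obtain ⟨hzl, hzc⟩ := chain_fork a b 0 hab (by rw [hglst]) (by rw [hcl])
          (hcc b) h1 h2 h3
        have hze : z2 = w := ext_lst_cpy (by rw [hzl, hwl]) (by rw [hzc, hwc])
        refine ⟨hze ▸ hw, ?_, ?_⟩
        · apply ne_len; rw [hzl, hglst]; simp
        · apply ne_len; rw [hzl, hcl]; simp
  have key : isVisible (gluedTree r 2 2) S (c 0) (c 1) → False := by
    intro hvis
    refine blocked2 ?_ ?_ hvis
    · have := dist_fork (u := c 0) (v := c 1) s [] [] 0 1 (by decide) (by rw [hcl])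
        (by rw [hcl]) (by simp [hcc])
      simpa using this
    · intro z h1 h2
      obtain ⟨hzl, hzc⟩ := mid_sib (s := s) 0 1 (by decide) (hcl 0) (hcl 1) (hcc 0) h1 h2
      have hze : z = w := ext_lst_cpy (by rw [hzl, hwl]) (by rw [hzc, hwc])
      refine ⟨hze ▸ hw, ?_, ?_⟩
      · apply ne_len; rw [hzl, hcl]; simp
      · apply ne_len; rw [hzl, hcl]; simp
  by_cases h0 : c 0 ∈ S <;> by_cases h1 : c 1 ∈ S
  · exact key (hMV _ h0 _ h1)
  · exact mixed 0 1 (by decide) h0 h1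
  · exact mixed 1 0 (by decide) h1 h0
  · exact key (hOut _ h0 _ h1)

include hMV hOut in
/-- a depth r-1 internal vertex and a leaf below it cannot both be in S -/
theorem no_w_leaf {j : Fin 2} {s : List (Fin 2)} (hsl : s.length + 1 = r) (hr : 2 ≤ r)
    (b0 : Fin 2) (hw : (Sum.inl (j, ⟨s, by omega⟩) : V2 r) ∈ S)
    (hx : (Sum.inr ⟨s ++ [b0], by simp; omega⟩ : V2 r) ∈ S) : False := by
  rcases List.eq_nil_or_concat s with rfl | ⟨t, xl, hst⟩
  · simp at hsl; omega
  rw [List.concat_eq_append] at hst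
  subst hst
  have htl : t.length + 2 = r := by simp at hsl; omega
  set w : V2 r := Sum.inl (j, ⟨t ++ [xl], by omega⟩) with hwdef
  set x : V2 r := Sum.inr ⟨(t ++ [xl]) ++ [b0], by simp; omega⟩ with hxdef
  have hwl : lst w = t ++ [xl] := rfl
  have hwc : cpy w = some j := rfl
  have hxl : lst x = (t ++ [xl]) ++ [b0] := rfl
  have hxc : cpy x = none := rfl
  set p : V2 r := Sum.inl (j, ⟨t, by omega⟩) with hpdef
  have hpl : lst p = t := rfl
  have hpc : cpy p = some j := rfl
  have hp : p ∉ S := fun h => no_shallow hMV hOut (by omega) h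
  obtain ⟨b1, hb⟩ := fin2_other b0
  set y : V2 r := Sum.inr ⟨(t ++ [xl]) ++ [b1], by simp; omega⟩ with hydef
  have hyl : lst y = (t ++ [xl]) ++ [b1] := rfl
  have hyc : cpy y = none := rfl
  by_cases hy : y ∈ S
  · obtain ⟨j', hj'⟩ := fin2_other j
    set w' : V2 r := Sum.inl (j', ⟨t ++ [xl], by omega⟩) with hw'def
    have hw'l : lst w' = t ++ [xl] := rfl
    have hw'c : cpy w' = some j' := rfl
    by_cases hw' : w' ∈ S
    · -- both twin leaves in S, both w's in S: use pair (x, y)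
      refine blocked2 ?_ ?_ (hMV x hx y hy)
      · have := dist_fork (u := x) (v := y) (t ++ [xl]) [] [] b0 b1 (Ne.symm hb)
          (by rw [hxl]) (by rw [hyl]) (by simp [hxc])
        simpa using this
      · intro z h1 h2
        obtain ⟨hzl, hzc⟩ := mid_twin b0 hxl hxc h1
        obtain ⟨k, hk⟩ := Option.ne_none_iff_exists'.mp hzc
        have hzw : z = w ∨ z = w' := by
          rcases fin2_cases (k := k) hj' with he | he
          · exact Or.inr (ext_lst_cpy (by rw [hzl, hw'l]) (by rw [hk, he, hw'c]))
          · exact Or.inl (ext_lst_cpy (by rw [hzl, hwl]) (by rw [hk, he, hwc]))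
        have hzS : z ∈ S := by rcases hzw with h | h <;> rw [h] <;> assumption
        refine ⟨hzS, ?_, ?_⟩
        · apply ne_len; rw [hzl, hxl]; simp
        · apply ne_len; rw [hzl, hyl]; simp
    · -- pair (p, w') across copies, distance 3
      refine blocked3 ?_ ?_ (hOut p hp w' hw')
      · have := dist_cross_desc (u := p) (v := w') [xl] (by rw [hw'l, hpl]) hpc hw'c
          (Ne.symm hj')
        rw [this, hpl]
        simp
        omega
      · intro z1 z2 h1 h2 h3
        right
        obtain ⟨d, hzl, hzc⟩ := chain_cross xl (Ne.symm hj') hpl hw'l hpc hw'c htl h1 h2 h3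
        have hzxy : z2 = x ∨ z2 = y := by
          rcases fin2_cases (k := d) (Ne.symm hb) with he | he
          · exact Or.inl (ext_lst_cpy (by rw [hzl, hxl, he]) (by rw [hzc, hxc]))
          · exact Or.inr (ext_lst_cpy (by rw [hzl, hyl, he]) (by rw [hzc, hyc]))
        have hzS : z2 ∈ S := by rcases hzxy with h | h <;> rw [h] <;> assumption
        refine ⟨hzS, ?_, ?_⟩
        · apply ne_len; rw [hzl, hpl]; simp
        · apply ne_len; rw [hzl, hw'l]; simp
  · -- pair (p, y): unique middle w ∈ S
    refine blocked2 ?_ ?_ (hOut p hp y hy)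
    · have := dist_desc (u := p) (v := y) [xl, b1] (by rw [hyl, hpl]; simp) (by simp [hyc])
      simpa using this
    · intro z h1 h2
      obtain ⟨hzl, hzc⟩ := mid_desc2 xl b1 (by rw [hyl, hpl]; simp) hpc h1 h2
      rw [hpl] at hzl
      have hze : z = w := ext_lst_cpy (by rw [hzl, hwl]) (by rw [hzc, hwc])
      refine ⟨hze ▸ hw, ?_, ?_⟩
      · apply ne_len; rw [hzl, hpl]; simp
      · apply ne_len; rw [hzl, hyl]; simp

include hMV hOut in
/-- the two copies of a depth r-1 internal vertex cannot both be in S -/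
theorem no_two_w {j j' : Fin 2} {s : List (Fin 2)} (hsl : s.length + 1 = r) (hr : 2 ≤ r)
    (hjj : j ≠ j') (h1 : (Sum.inl (j, ⟨s, by omega⟩) : V2 r) ∈ S)
    (h2 : (Sum.inl (j', ⟨s, by omega⟩) : V2 r) ∈ S) : False := by
  set x : V2 r := Sum.inr ⟨s ++ [0], by simp; omega⟩ with hxdef
  set y : V2 r := Sum.inr ⟨s ++ [1], by simp; omega⟩ with hydef
  have hxl : lst x = s ++ [0] := rfl
  have hyl : lst y = s ++ [1] := rfl
  have hxc : cpy x = none := rfl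
  have hyc : cpy y = none := rfl
  by_cases hx : x ∈ S
  · exact no_w_leaf hMV hOut hsl hr 0 h1 hx
  by_cases hy : y ∈ S
  · exact no_w_leaf hMV hOut hsl hr 1 h1 hy
  refine blocked2 ?_ ?_ (hOut _ hx _ hy)
  · have := dist_fork (u := x) (v := y) s [] [] 0 1 (by decide) hxl hyl (by simp [hxc])
    simpa using this
  · intro z hz1 hz2
    obtain ⟨hzl, hzc⟩ := mid_twin 0 hxl hxc hz1
    obtain ⟨k, hk⟩ := Option.ne_none_iff_exists'.mp hzc
    have hzw : z = Sum.inl (j, ⟨s, by omega⟩) ∨ z = Sum.inl (j', ⟨s, by omega⟩) := by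
      rcases fin2_cases (k := k) hjj with he | he
      · exact Or.inl (ext_lst_cpy (by rw [hzl]; rfl) (by rw [hk, he]; rfl))
      · exact Or.inr (ext_lst_cpy (by rw [hzl]; rfl) (by rw [hk, he]; rfl))
    have hzS : z ∈ S := by rcases hzw with h | h <;> rw [h] <;> assumption
    refine ⟨hzS, ?_, ?_⟩
    · apply ne_len; rw [hzl, hxl]; simp
    · apply ne_len; rw [hzl, hyl]; simp

include hMV hOut in
/-- twin leaves cannot both be in S -/
theorem no_two_leaves {d1 d2 : Fin 2} {s : List (Fin 2)} (hsl : s.length + 1 = r) (hr : 2 ≤ r)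
    (hdd : d1 ≠ d2) (h1 : (Sum.inr ⟨s ++ [d1], by simp; omega⟩ : V2 r) ∈ S)
    (h2 : (Sum.inr ⟨s ++ [d2], by simp; omega⟩ : V2 r) ∈ S) : False := by
  set w0 : V2 r := Sum.inl (0, ⟨s, by omega⟩) with hw0def
  set w1 : V2 r := Sum.inl (1, ⟨s, by omega⟩) with hw1def
  have hw0l : lst w0 = s := rfl
  have hw1l : lst w1 = s := rfl
  have hw0c : cpy w0 = some 0 := rfl
  have hw1c : cpy w1 = some 1 := rfl
  by_cases hw0 : w0 ∈ S
  · exact no_w_leaf hMV hOut hsl hr d1 hw0 h1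
  by_cases hw1 : w1 ∈ S
  · exact no_w_leaf hMV hOut hsl hr d1 hw1 h1
  refine blocked2 ?_ ?_ (hOut _ hw0 _ hw1)
  · have := dist_cross_desc (u := w0) (v := w1) [] (by rw [hw0l, hw1l]; simp) hw0c hw1c
      (by decide)
    rw [this, hw0l]
    simp
    omega
  · intro z hz1 hz2
    obtain ⟨d, hzl, hzc⟩ := mid_cross hw0l hw1l hw0c hw1c (by decide) hz1 hz2
    have hzxy : z = Sum.inr ⟨s ++ [d1], by simp; omega⟩ ∨
        z = Sum.inr ⟨s ++ [d2], by simp; omega⟩ := by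
      rcases fin2_cases (k := d) hdd with he | he
      · exact Or.inl (ext_lst_cpy (by rw [hzl, he]; rfl) (by rw [hzc]; rfl))
      · exact Or.inr (ext_lst_cpy (by rw [hzl, he]; rfl) (by rw [hzc]; rfl))
    have hzS : z ∈ S := by rcases hzxy with h | h <;> rw [h] <;> assumption
    refine ⟨hzS, ?_, ?_⟩
    · apply ne_len; rw [hzl, hw0l]; simp
    · apply ne_len; rw [hzl, hw1l]; simp

include hMV hOut in
/-- a leaf and an internal vertex of S over the same depth-(r-1) stem conflict -/
theorem no_mixed {i : Fin 2} {t : List (Fin 2)} {d : Fin 2} (htl : t.length + 1 = r)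
    (hr : 2 ≤ r) (hu : (Sum.inl (i, ⟨t, by omega⟩) : V2 r) ∈ S)
    (hv : (Sum.inr ⟨t ++ [d], by simp; omega⟩ : V2 r) ∈ S) : False :=
  no_w_leaf hMV hOut htl hr d hu hv

include hMV hOut in
theorem upper_bound (hr : 2 ≤ r) : S.ncard ≤ 2 ^ (r - 1) := by
  classical
  have hT : {l : List (Fin 2) | l.length = r - 1} =
      Set.range (fun v : List.Vector (Fin 2) (r - 1) => v.val) := by
    ext l
    constructor
    · intro h; exact ⟨⟨l, h⟩, rfl⟩
    · rintro ⟨v, rfl⟩; exact v.prop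
  have hTfin : {l : List (Fin 2) | l.length = r - 1}.Finite := by
    rw [hT]; exact Set.finite_range _
  have hTcard : {l : List (Fin 2) | l.length = r - 1}.ncard = 2 ^ (r - 1) := by
    have himg : ((fun v : List.Vector (Fin 2) (r - 1) => v.val) '' Set.univ).ncard =
        (Set.univ : Set (List.Vector (Fin 2) (r - 1))).ncard :=
      Set.ncard_image_of_injective _ (fun a b h => Subtype.val_injective h)
    rw [hT, ← Set.image_univ, himg, Set.ncard_univ, Nat.card_eq_fintype_card, card_vector]
    simp
  have shape : ∀ x ∈ S, ((lst x).length = r - 1 ∧ cpy x ≠ none) ∨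
      ((lst x).length = r ∧ cpy x = none) := by
    intro x hx
    cases x with
    | inl p =>
      obtain ⟨i, sv⟩ := p
      left
      refine ⟨?_, by simp⟩
      by_contra h
      have hlen : (lst (Sum.inl (i, sv) : V2 r)).length = sv.val.length := rfl
      have h2 : sv.val.length + 2 ≤ r := by
        have := sv.prop
        rw [hlen] at h
        omega
      refine no_shallow (i := i) hMV hOut h2 ?_
      have he : (Sum.inl (i, ⟨sv.val, by omega⟩) : V2 r) = Sum.inl (i, sv) :=
        ext_lst_cpy rfl rfl
      rw [he]; exact hx
    | inr l => right; exact ⟨l.prop, rfl⟩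
  refine le_trans (Set.ncard_le_ncard_of_injOn (fun x => (lst x).take (r - 1)) ?_ ?_ hTfin)
    (le_of_eq hTcard)
  · intro x hx
    rcases shape x hx with ⟨h, -⟩ | ⟨h, -⟩ <;>
      · show ((lst x).take (r - 1)).length = r - 1
        rw [List.length_take]
        omega
  · intro u hu v hv he
    simp only at he
    rcases shape u hu with ⟨hul, huc⟩ | ⟨hul, huc⟩
    · obtain ⟨i, hi⟩ := Option.ne_none_iff_exists'.mp huc
      have hue : u = Sum.inl (i, ⟨lst u, by omega⟩) := ext_lst_cpy rfl (by rw [hi]; rfl)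
      have htu : (lst u).take (r - 1) = lst u := List.take_of_length_le (by omega)
      rcases shape v hv with ⟨hvl, hvc⟩ | ⟨hvl, hvc⟩
      · obtain ⟨i', hi'⟩ := Option.ne_none_iff_exists'.mp hvc
        have hve : v = Sum.inl (i', ⟨lst v, by omega⟩) := ext_lst_cpy rfl (by rw [hi']; rfl)
        have htv : (lst v).take (r - 1) = lst v := List.take_of_length_le (by omega)
        have hlv : lst u = lst v := by rw [← htu, ← htv, he]
        by_cases hii : i = i'
        · exact ext_lst_cpy hlv (by rw [hi, hi', hii])
        · exfalso
          have hve' : v = Sum.inl (i', ⟨lst u, by omega⟩) :=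
            ext_lst_cpy hlv.symm (by rw [hi']; rfl)
          exact no_two_w hMV hOut (s := lst u) (by omega) hr hii (hue ▸ hu) (hve' ▸ hv)
      · exfalso
        rcases List.eq_nil_or_concat (lst v) with hnil | ⟨t, d, htd⟩
        · rw [hnil] at hvl; simp at hvl; omega
        rw [List.concat_eq_append] at htd
        have htl : t.length + 1 = r := by
          have := congrArg List.length htd; simp at this; omega
        have htake : (lst v).take (r - 1) = t := by
          rw [htd]; exact List.take_left' (by omega)
        have hlu : lst u = t := by rw [← htu, he, htake]
        have hue2 : u = Sum.inl (i, ⟨t, by omega⟩) := ext_lst_cpy hlu (by rw [hi]; rfl)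
        have hve2 : v = Sum.inr ⟨t ++ [d], by simp; omega⟩ := ext_lst_cpy htd hvc
        exact no_mixed hMV hOut (by omega) hr (hue2 ▸ hu) (hve2 ▸ hv)
    · rcases List.eq_nil_or_concat (lst u) with hnil | ⟨t, d, htd⟩
      · rw [hnil] at hul; simp at hul; omega
      rw [List.concat_eq_append] at htd
      have htl : t.length + 1 = r := by
        have := congrArg List.length htd; simp at this; omega
      have htake : (lst u).take (r - 1) = t := by
        rw [htd]; exact List.take_left' (by omega)
      have hue : u = Sum.inr ⟨t ++ [d], by simp; omega⟩ := ext_lst_cpy htd huc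
      rcases shape v hv with ⟨hvl, hvc⟩ | ⟨hvl, hvc⟩
      · exfalso
        obtain ⟨i', hi'⟩ := Option.ne_none_iff_exists'.mp hvc
        have htv : (lst v).take (r - 1) = lst v := List.take_of_length_le (by omega)
        have hlv : lst v = t := by rw [← htv, ← he, htake]
        have hve : v = Sum.inl (i', ⟨t, by omega⟩) := ext_lst_cpy hlv (by rw [hi']; rfl)
        exact no_mixed hMV hOut (by omega) hr (hve ▸ hv) (hue ▸ hu)
      · rcases List.eq_nil_or_concat (lst v) with hnil | ⟨t2, d2, htd2⟩
        · exfalso; rw [hnil] at hvl; simp at hvl; omega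
        rw [List.concat_eq_append] at htd2
        have htl2 : t2.length + 1 = r := by
          have := congrArg List.length htd2; simp at this; omega
        have htake2 : (lst v).take (r - 1) = t2 := by
          rw [htd2]; exact List.take_left' (by omega)
        have htt : t = t2 := by rw [← htake, he, htake2]
        subst htt
        by_cases hdd : d = d2
        · exact ext_lst_cpy (by rw [htd, htd2, hdd]) (by rw [huc, hvc])
        · exfalso
          have hve : v = Sum.inr ⟨t ++ [d2], by simp; omega⟩ := ext_lst_cpy htd2 hvc
          exact no_two_leaves hMV hOut (by omega) hr hdd (hue ▸ hu) (hve ▸ hv)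

end Upper

end GTProof

theorem stmt8 (r : ℕ) (hr : 2 ≤ r) :
    IsGreatest {k : ℕ | ∃ S : Set (gluedVert r 2 2),
      isTotalMVSet (gluedTree r 2 2) S ∧ S.ncard = k} (2 ^ (r - 1)) ∧
    IsGreatest {k : ℕ | ∃ S : Set (gluedVert r 2 2),
      isDualMVSet (gluedTree r 2 2) S ∧ S.ncard = k} (2 ^ (r - 1)) := by
  have hlow : isTotalMVSet (gluedTree r 2 2) (GTProof.S0 r) := fun u v => GTProof.S0_total u v
  have hncard := GTProof.S0_ncard (r := r) (by omega)
  constructor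
  · constructor
    · exact ⟨GTProof.S0 r, hlow, hncard⟩
    · rintro k ⟨S, hS, rfl⟩
      exact GTProof.upper_bound (fun u _ v _ => hS u v) (fun u _ v _ => hS u v) hr
  · constructor
    · exact ⟨GTProof.S0 r, ⟨fun u _ v _ => hlow u v, fun u _ v _ => hlow u v⟩, hncard⟩
    · rintro k ⟨S, ⟨hMV, hOut⟩, rfl⟩
      exact GTProof.upper_bound hMV hOut hr
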